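/- If K, K̃ ∈ ℝ^{N×N} are symmetric PSD matrices with ‖K̃ − K‖₂ ≤ ε², and Tr(K) ≤ 1+ρ and Tr(K̃) ≤ 1+ρ, and D is a diagonal matrix with ±1 entries, then ‖√K̃ D √K̃ − √K D √K‖_F ≤ 2(1+ρ)ε. -/

import Mathlib

open Matrix

/-- The spectral (ℓ₂ operator) norm of a square real matrix. -/
noncomputable def specNorm {N : ℕ} (A : Matrix (Fin N) (Fin N) ℝ) : ℝ :=
  ‖Matrix.toEuclideanCLM (𝕜 := ℝ) A‖

/-- The Frobenius norm of a real matrix. -/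
noncomputable def frobNorm {m n : Type*} [Fintype m] [Fintype n]
    (A : Matrix m n ℝ) : ℝ :=
  Real.sqrt (∑ i, ∑ j, A i j ^ 2)

open scoped ComplexOrder in
/-- The positive semidefinite square root of a positive semidefinite matrix
(the definition `Matrix.PosSemidef.sqrt` of the older Mathlib, since removed). -/
noncomputable def Matrix.PosSemidef.sqrt {n 𝕜 : Type*} [Fintype n] [DecidableEq n] [RCLike 𝕜]
    {A : Matrix n n 𝕜} (hA : A.PosSemidef) : Matrix n n 𝕜 :=
  hA.1.eigenvectorUnitary.1 * diagonal ((↑) ∘ Real.sqrt ∘ hA.1.eigenvalues) *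
    (star hA.1.eigenvectorUnitary : Matrix n n 𝕜)

open scoped ComplexOrder in
lemma Matrix.PosSemidef.posSemidef_sqrt {n 𝕜 : Type*} [Fintype n] [DecidableEq n] [RCLike 𝕜]
    {A : Matrix n n 𝕜} (hA : A.PosSemidef) : hA.sqrt.PosSemidef := by
  unfold Matrix.PosSemidef.sqrt
  have hD : (diagonal ((↑) ∘ Real.sqrt ∘ hA.1.eigenvalues) : Matrix n n 𝕜).PosSemidef :=
    Matrix.posSemidef_diagonal_iff.mpr fun i => by
      simp only [Function.comp_apply]; exact_mod_cast Real.sqrt_nonneg _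
  have := hD.mul_mul_conjTranspose_same (hA.1.eigenvectorUnitary : Matrix n n 𝕜)
  simpa [Matrix.star_eq_conjTranspose] using this

open scoped ComplexOrder in
lemma Matrix.PosSemidef.sqrt_mul_self {n 𝕜 : Type*} [Fintype n] [DecidableEq n] [RCLike 𝕜]
    {A : Matrix n n 𝕜} (hA : A.PosSemidef) : hA.sqrt * hA.sqrt = A := by
  conv_rhs => rw [hA.1.spectral_theorem, Unitary.conjStarAlgAut_apply]
  unfold Matrix.PosSemidef.sqrt
  have hU : (star hA.1.eigenvectorUnitary : Matrix n n 𝕜) * hA.1.eigenvectorUnitary = 1 :=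
    Unitary.coe_star_mul_self _
  set U := hA.1.eigenvectorUnitary
  rw [show (U : Matrix n n 𝕜) * diagonal ((↑) ∘ Real.sqrt ∘ hA.1.eigenvalues) * (star U : Matrix n n 𝕜) *
      ((U : Matrix n n 𝕜) * diagonal ((↑) ∘ Real.sqrt ∘ hA.1.eigenvalues) * (star U : Matrix n n 𝕜))
      = (U : Matrix n n 𝕜) * (diagonal ((↑) ∘ Real.sqrt ∘ hA.1.eigenvalues) *
        ((star U : Matrix n n 𝕜) * (U : Matrix n n 𝕜)) * diagonal ((↑) ∘ Real.sqrt ∘ hA.1.eigenvalues)) *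
        (star U : Matrix n n 𝕜) by simp only [mul_assoc], hU, mul_one, diagonal_mul_diagonal]
  congr 3
  funext i
  simp only [Function.comp_apply]
  rw [← RCLike.ofReal_mul, Real.mul_self_sqrt (hA.eigenvalues_nonneg i)]


lemma frobNorm_nonneg {m n : Type*} [Fintype m] [Fintype n] (A : Matrix m n ℝ) :
    0 ≤ frobNorm A := Real.sqrt_nonneg _

lemma specNorm_nonneg {N : ℕ} (A : Matrix (Fin N) (Fin N) ℝ) : 0 ≤ specNorm A :=
  norm_nonneg _

lemma sum_sq_nonneg {m n : Type*} [Fintype m] [Fintype n] (A : Matrix m n ℝ) :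
    0 ≤ ∑ i, ∑ j, A i j ^ 2 :=
  Finset.sum_nonneg fun _ _ => Finset.sum_nonneg fun _ _ => sq_nonneg _

lemma frobNorm_sq {m n : Type*} [Fintype m] [Fintype n] (A : Matrix m n ℝ) :
    frobNorm A ^ 2 = ∑ i, ∑ j, A i j ^ 2 :=
  Real.sq_sqrt (sum_sq_nonneg A)

section Frob
attribute [local instance] Matrix.frobeniusNormedAddCommGroup

lemma frobNorm_eq_norm {m n : Type*} [Fintype m] [Fintype n] (A : Matrix m n ℝ) :
    frobNorm A = ‖A‖ := by
  rw [Matrix.frobenius_norm_def, frobNorm, Real.sqrt_eq_rpow]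
  congr 1
  refine Finset.sum_congr rfl fun i _ => Finset.sum_congr rfl fun j _ => ?_
  rw [Real.norm_eq_abs, show (2:ℝ) = ((2:ℕ):ℝ) by norm_num, Real.rpow_natCast, sq_abs]

lemma frobNorm_add_le {m n : Type*} [Fintype m] [Fintype n] (A B : Matrix m n ℝ) :
    frobNorm (A + B) ≤ frobNorm A + frobNorm B := by
  simp only [frobNorm_eq_norm]; exact norm_add_le _ _

end Frob

section Spec
open scoped Matrix.Norms.L2Operator

lemma specNorm_eq_l2 {N : ℕ} (A : Matrix (Fin N) (Fin N) ℝ) : specNorm A = ‖A‖ := rfl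

lemma specNorm_transpose {N : ℕ} (A : Matrix (Fin N) (Fin N) ℝ) :
    specNorm Aᵀ = specNorm A := by
  rw [specNorm_eq_l2, specNorm_eq_l2, ← conjTranspose_eq_transpose_of_trivial,
    Matrix.l2_opNorm_conjTranspose]

lemma euclidean_norm_sq {N : ℕ} (x : EuclideanSpace ℝ (Fin N)) :
    ‖x‖ ^ 2 = ∑ i, x i ^ 2 := by
  rw [EuclideanSpace.norm_eq, Real.sq_sqrt (Finset.sum_nonneg fun _ _ => sq_nonneg _)]
  · exact Finset.sum_congr rfl fun i _ => by rw [Real.norm_eq_abs, sq_abs]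

lemma mulVec_norm_le {N : ℕ} (A : Matrix (Fin N) (Fin N) ℝ) (x : Fin N → ℝ) :
    ‖((WithLp.equiv 2 (Fin N → ℝ)).symm (A *ᵥ x) : EuclideanSpace ℝ (Fin N))‖
      ≤ specNorm A * ‖((WithLp.equiv 2 (Fin N → ℝ)).symm x : EuclideanSpace ℝ (Fin N))‖ := by
  rw [specNorm_eq_l2]
  exact Matrix.l2_opNorm_mulVec A _

end Spec

lemma frobNorm_mul_le_right {N : ℕ} (A B : Matrix (Fin N) (Fin N) ℝ) :
    frobNorm (A * B) ≤ specNorm A * frobNorm B := by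
  have key : ∀ j, ∑ i, (A * B) i j ^ 2 ≤ specNorm A ^ 2 * ∑ i, B i j ^ 2 := by
    intro j
    have h := mulVec_norm_le A (fun k => B k j)
    have h1 : ‖((WithLp.equiv 2 (Fin N → ℝ)).symm (A *ᵥ fun k => B k j) :
        EuclideanSpace ℝ (Fin N))‖ ^ 2 = ∑ i, (A * B) i j ^ 2 := by
      rw [euclidean_norm_sq]
      exact Finset.sum_congr rfl fun i _ => by
        simp [Matrix.mul_apply, Matrix.mulVec, dotProduct]
    have h2 : ‖((WithLp.equiv 2 (Fin N → ℝ)).symm (fun k => B k j) :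
        EuclideanSpace ℝ (Fin N))‖ ^ 2 = ∑ i, B i j ^ 2 := by
      rw [euclidean_norm_sq]; rfl
    calc ∑ i, (A * B) i j ^ 2 = _ ^ 2 := h1.symm
      _ ≤ (specNorm A * _) ^ 2 := by
          apply pow_le_pow_left₀ (norm_nonneg _) h
      _ = specNorm A ^ 2 * ∑ i, B i j ^ 2 := by rw [mul_pow, h2]
  have hsum : ∑ j, ∑ i, (A * B) i j ^ 2 ≤ specNorm A ^ 2 * ∑ j, ∑ i, B i j ^ 2 := by
    rw [Finset.mul_sum]
    exact Finset.sum_le_sum fun j _ => key j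
  rw [frobNorm, frobNorm, Finset.sum_comm]
  calc Real.sqrt (∑ j, ∑ i, (A * B) i j ^ 2)
      ≤ Real.sqrt (specNorm A ^ 2 * ∑ j, ∑ i, B i j ^ 2) := Real.sqrt_le_sqrt hsum
    _ = specNorm A * Real.sqrt (∑ j, ∑ i, B i j ^ 2) := by
        rw [Real.sqrt_mul (sq_nonneg _), Real.sqrt_sq (specNorm_nonneg A)]
    _ = specNorm A * frobNorm B := by rw [frobNorm, Finset.sum_comm]

lemma frobNorm_transpose {m n : Type*} [Fintype m] [Fintype n] (A : Matrix m n ℝ) :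
    frobNorm Aᵀ = frobNorm A := by
  rw [frobNorm, frobNorm, Finset.sum_comm]; rfl

lemma frobNorm_mul_le_left {N : ℕ} (A B : Matrix (Fin N) (Fin N) ℝ) :
    frobNorm (A * B) ≤ frobNorm A * specNorm B := by
  calc frobNorm (A * B) = frobNorm ((A * B)ᵀ) := (frobNorm_transpose _).symm
    _ = frobNorm (Bᵀ * Aᵀ) := by rw [Matrix.transpose_mul]
    _ ≤ specNorm Bᵀ * frobNorm Aᵀ := frobNorm_mul_le_right _ _
    _ = frobNorm A * specNorm B := by rw [specNorm_transpose, frobNorm_transpose, mul_comm]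

-- dot product facts
section Dot

variable {N : ℕ}

lemma dot_self_eq_norm_sq (v : EuclideanSpace ℝ (Fin N)) :
    (⇑v : Fin N → ℝ) ⬝ᵥ ⇑v = ‖v‖ ^ 2 := by
  rw [euclidean_norm_sq, dotProduct]
  exact Finset.sum_congr rfl fun i _ => (sq (v i)).symm

lemma dot_mulVec_eq_inner (A : Matrix (Fin N) (Fin N) ℝ) (x y : EuclideanSpace ℝ (Fin N)) :
    (⇑x : Fin N → ℝ) ⬝ᵥ (A *ᵥ ⇑y) =
      inner ℝ x (Matrix.toEuclideanCLM (𝕜 := ℝ) A y) := by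
  rw [PiLp.inner_apply]
  simp only [RCLike.inner_apply, starRingEnd_apply, star_trivial]
  have : ∀ i, (Matrix.toEuclideanCLM (𝕜 := ℝ) A y) i = (A *ᵥ ⇑y) i := by
    intro i
    have := Matrix.ofLp_toEuclideanCLM (n := Fin N) (𝕜 := ℝ) A y
    calc (Matrix.toEuclideanCLM (𝕜 := ℝ) A y) i
        = (WithLp.equiv 2 (Fin N → ℝ) (Matrix.toEuclideanCLM (𝕜 := ℝ) A y)) i := rfl
      _ = (A *ᵥ ⇑y) i := congrFun this i
  simp only [this]
  exact dotProduct_comm _ _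

lemma abs_dot_mulVec_le (A : Matrix (Fin N) (Fin N) ℝ) (v : EuclideanSpace ℝ (Fin N))
    (hv : ‖v‖ = 1) : |(⇑v : Fin N → ℝ) ⬝ᵥ (A *ᵥ ⇑v)| ≤ specNorm A := by
  rw [dot_mulVec_eq_inner]
  calc |inner ℝ v (Matrix.toEuclideanCLM (𝕜 := ℝ) A v)|
      ≤ ‖v‖ * ‖Matrix.toEuclideanCLM (𝕜 := ℝ) A v‖ := abs_real_inner_le_norm _ _
    _ ≤ ‖v‖ * (specNorm A * ‖v‖) :=
        mul_le_mul_of_nonneg_left ((Matrix.toEuclideanCLM (𝕜 := ℝ) A).le_opNorm v)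
          (norm_nonneg _)
    _ = specNorm A := by rw [hv]; ring

end Dot

section PS

variable {N : ℕ} {K Kt : Matrix (Fin N) (Fin N) ℝ}

lemma specNorm_sqrt_sub_sqrt_le (hK : K.PosSemidef) (hKt : Kt.PosSemidef) {δ : ℝ}
    (h : specNorm (Kt - K) ≤ δ) :
    specNorm (hKt.sqrt - hK.sqrt) ≤ Real.sqrt δ := by
  have hδ : 0 ≤ δ := le_trans (specNorm_nonneg _) h
  set S := hK.sqrt with hSdef
  set St := hKt.sqrt with hStdef
  have hSps := hK.posSemidef_sqrt
  have hStps := hKt.posSemidef_sqrt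
  set C := St - S with hCdef
  have hC : C.IsHermitian := hStps.1.sub hSps.1
  have hCT : Cᵀ = C := by
    rw [← conjTranspose_eq_transpose_of_trivial]; exact hC
  -- eigenvalue bound
  have key : ∀ i, hC.eigenvalues i ^ 2 ≤ δ := by
    intro i
    set μ := hC.eigenvalues i with hμdef
    set v : EuclideanSpace ℝ (Fin N) := hC.eigenvectorBasis i with hvdef
    have hv1 : ‖v‖ = 1 := hC.eigenvectorBasis.orthonormal.1 i
    set w : Fin N → ℝ := ⇑v with hwdef
    have hev : C *ᵥ w = μ • w := hC.mulVec_eigenvectorBasis i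
    have hww : w ⬝ᵥ w = 1 := by rw [dot_self_eq_norm_sq, hv1]; norm_num
    set a := w ⬝ᵥ (S *ᵥ w) with hadef
    set b := w ⬝ᵥ (St *ᵥ w) with hbdef
    have ha : 0 ≤ a := by simpa using hSps.dotProduct_mulVec_nonneg w
    have hb : 0 ≤ b := by simpa using hStps.dotProduct_mulVec_nonneg w
    have hμab : μ = b - a := by
      have : w ⬝ᵥ (C *ᵥ w) = μ := by
        rw [hev, dotProduct_smul, smul_eq_mul, hww, mul_one]
      rw [← this, hCdef, Matrix.sub_mulVec, dotProduct_sub]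
    have hmain : w ⬝ᵥ ((Kt - K) *ᵥ w) = μ * (b + a) := by
      have hKtK : Kt - K = St * C + C * S := by
        rw [hCdef]
        rw [show St * (St - S) + (St - S) * S = St * St - S * S by noncomm_ring]
        rw [hKt.sqrt_mul_self, hK.sqrt_mul_self]
      rw [hKtK, Matrix.add_mulVec, dotProduct_add]
      have h1 : w ⬝ᵥ ((St * C) *ᵥ w) = μ * b := by
        rw [← Matrix.mulVec_mulVec, hev, Matrix.mulVec_smul, dotProduct_smul,
          smul_eq_mul]
      have h2 : w ⬝ᵥ ((C * S) *ᵥ w) = μ * a := by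
        rw [← Matrix.mulVec_mulVec, Matrix.dotProduct_mulVec]
        have : w ᵥ* C = μ • w := by
          rw [← hCT, Matrix.vecMul_transpose, hev]
        rw [this, smul_dotProduct, smul_eq_mul]
      rw [h1, h2, mul_add]
    have habs : |μ| ≤ b + a := by
      rw [hμab]
      calc |b - a| ≤ |b| + |a| := abs_sub _ _
        _ = b + a := by rw [abs_of_nonneg hb, abs_of_nonneg ha]
    calc μ ^ 2 = |μ| * |μ| := by rw [sq]; exact (abs_mul_abs_self μ).symm
      _ ≤ (b + a) * |μ| := mul_le_mul_of_nonneg_right habs (abs_nonneg _)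
      _ = |μ * (b + a)| := by
          rw [abs_mul, abs_of_nonneg (by linarith : (0:ℝ) ≤ b + a)]; ring
      _ = |w ⬝ᵥ ((Kt - K) *ᵥ w)| := by rw [hmain]
      _ ≤ specNorm (Kt - K) := abs_dot_mulVec_le _ v hv1
      _ ≤ δ := h
  -- operator norm bound via eigenbasis expansion
  rw [specNorm]
  apply ContinuousLinearMap.opNorm_le_bound _ (Real.sqrt_nonneg δ)
  intro x
  set T := Matrix.toEuclideanCLM (𝕜 := ℝ) C with hTdef
  have hTsq : ‖T x‖ ^ 2 ≤ δ * ‖x‖ ^ 2 := by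
    have hrepr : ∀ (y : EuclideanSpace ℝ (Fin N)),
        ‖y‖ ^ 2 = ∑ i, (inner ℝ (hC.eigenvectorBasis i) y : ℝ) ^ 2 := by
      intro y
      rw [← hC.eigenvectorBasis.repr.norm_map y, euclidean_norm_sq]
      exact Finset.sum_congr rfl fun i _ => by
        rw [hC.eigenvectorBasis.repr_apply_apply]
    have hcoeff : ∀ i, (inner ℝ (hC.eigenvectorBasis i) (T x) : ℝ) =
        hC.eigenvalues i * inner ℝ (hC.eigenvectorBasis i) x := by
      intro i
      rw [← dot_mulVec_eq_inner]
      rw [Matrix.dotProduct_mulVec]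
      have hvm : (⇑(hC.eigenvectorBasis i) : Fin N → ℝ) ᵥ* C
          = hC.eigenvalues i • ⇑(hC.eigenvectorBasis i) := by
        have hgen : ∀ (u : Fin N → ℝ) (μ' : ℝ), C *ᵥ u = μ' • u → u ᵥ* C = μ' • u := by
          intro u μ' hu
          rw [← hCT, Matrix.vecMul_transpose, hu]
        exact hgen _ _ (hC.mulVec_eigenvectorBasis i)
      rw [hvm, smul_dotProduct, smul_eq_mul]
      congr 1
      rw [EuclideanSpace.inner_eq_star_dotProduct, star_trivial, dotProduct_comm]
    rw [hrepr (T x), hrepr x, Finset.mul_sum]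
    refine Finset.sum_le_sum fun i _ => ?_
    rw [hcoeff i, mul_pow]
    exact mul_le_mul_of_nonneg_right (key i) (sq_nonneg _)
  have h1 : ‖T x‖ = Real.sqrt (‖T x‖ ^ 2) := (Real.sqrt_sq (norm_nonneg _)).symm
  rw [h1]
  calc Real.sqrt (‖T x‖ ^ 2) ≤ Real.sqrt (δ * ‖x‖ ^ 2) := Real.sqrt_le_sqrt hTsq
    _ = Real.sqrt δ * ‖x‖ := by
        rw [Real.sqrt_mul hδ, Real.sqrt_sq (norm_nonneg _)]

end PS

section Final

variable {N : ℕ}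

lemma frobNorm_mul_diagonal (A : Matrix (Fin N) (Fin N) ℝ) {dv : Fin N → ℝ}
    (hdv : ∀ i, dv i = 1 ∨ dv i = -1) :
    frobNorm (A * Matrix.diagonal dv) = frobNorm A := by
  rw [frobNorm, frobNorm]
  congr 1
  refine Finset.sum_congr rfl fun i _ => Finset.sum_congr rfl fun j _ => ?_
  rw [Matrix.mul_diagonal, mul_pow]
  rcases hdv j with h | h <;> rw [h] <;> ring

lemma frobNorm_diagonal_mul (A : Matrix (Fin N) (Fin N) ℝ) {dv : Fin N → ℝ}
    (hdv : ∀ i, dv i = 1 ∨ dv i = -1) :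
    frobNorm (Matrix.diagonal dv * A) = frobNorm A := by
  rw [frobNorm, frobNorm]
  congr 1
  refine Finset.sum_congr rfl fun i _ => Finset.sum_congr rfl fun j _ => ?_
  rw [Matrix.diagonal_mul, mul_pow]
  rcases hdv i with h | h <;> rw [h] <;> ring

lemma frobNorm_sqrt_le {K : Matrix (Fin N) (Fin N) ℝ} (hK : K.PosSemidef)
    {ρ : ℝ} (hρ : 0 ≤ ρ) (htr : K.trace ≤ 1 + ρ) :
    frobNorm hK.sqrt ≤ 1 + ρ := by
  have hT : hK.sqrt.transpose = hK.sqrt := by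
    rw [← conjTranspose_eq_transpose_of_trivial]
    exact hK.posSemidef_sqrt.1
  have hSym : ∀ i j, hK.sqrt j i = hK.sqrt i j := by
    intro i j
    have := congrFun (congrFun hT i) j
    simpa [Matrix.transpose_apply] using this
  have htrS : ∑ i, ∑ j, hK.sqrt i j ^ 2 = K.trace := by
    have htr2 : (hK.sqrt * hK.sqrt).trace = K.trace := by rw [hK.sqrt_mul_self]
    rw [← htr2, Matrix.trace]
    refine Finset.sum_congr rfl fun i _ => ?_
    rw [Matrix.diag_apply, Matrix.mul_apply]
    exact Finset.sum_congr rfl fun j _ => by rw [sq, hSym i j]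
  rw [frobNorm, htrS]
  calc Real.sqrt K.trace ≤ Real.sqrt ((1 + ρ) ^ 2) := by
        apply Real.sqrt_le_sqrt
        calc K.trace ≤ 1 + ρ := htr
          _ ≤ (1 + ρ) ^ 2 := by nlinarith
    _ = 1 + ρ := Real.sqrt_sq (by linarith)


/-- If `K, K̃` are symmetric PSD with `‖K̃ − K‖₂ ≤ ε²`, both traces at most `1+ρ`,
and `D` is diagonal with `±1` entries, then
`‖√K̃ D √K̃ − √K D √K‖_F ≤ 2(1+ρ)ε`. -/
theorem sqrt_conjugation_perturbation (N : ℕ)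
    (K Kt : Matrix (Fin N) (Fin N) ℝ) (hK : K.PosSemidef) (hKt : Kt.PosSemidef)
    (ρ ε : ℝ) (hρ : 0 ≤ ρ) (hε : 0 ≤ ε)
    (hnorm : specNorm (Kt - K) ≤ ε ^ 2)
    (htr : K.trace ≤ 1 + ρ) (htrt : Kt.trace ≤ 1 + ρ)
    (dv : Fin N → ℝ) (hdv : ∀ i, dv i = 1 ∨ dv i = -1) :
    frobNorm (hKt.sqrt * Matrix.diagonal dv * hKt.sqrt -
        hK.sqrt * Matrix.diagonal dv * hK.sqrt) ≤ 2 * (1 + ρ) * ε := by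

  set S := hK.sqrt with hSdef
  set St := hKt.sqrt with hStdef
  set D := Matrix.diagonal dv with hDdef
  have hspec : specNorm (St - S) ≤ ε := by
    have := specNorm_sqrt_sub_sqrt_le hK hKt hnorm
    rwa [Real.sqrt_sq hε] at this
  have hspec0 : 0 ≤ specNorm (St - S) := specNorm_nonneg _
  have hfS : frobNorm S ≤ 1 + ρ := frobNorm_sqrt_le hK hρ htr
  have hfSt : frobNorm St ≤ 1 + ρ := frobNorm_sqrt_le hKt hρ htrt
  have hdecomp : St * D * St - S * D * S = (St * D) * (St - S) + (St - S) * (D * S) := by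
    noncomm_ring
  rw [hdecomp]
  calc frobNorm ((St * D) * (St - S) + (St - S) * (D * S))
      ≤ frobNorm ((St * D) * (St - S)) + frobNorm ((St - S) * (D * S)) :=
        frobNorm_add_le _ _
    _ ≤ frobNorm (St * D) * specNorm (St - S) + specNorm (St - S) * frobNorm (D * S) :=
        add_le_add (frobNorm_mul_le_left _ _) (frobNorm_mul_le_right _ _)
    _ = frobNorm St * specNorm (St - S) + specNorm (St - S) * frobNorm S := by
        rw [frobNorm_mul_diagonal _ hdv, frobNorm_diagonal_mul _ hdv]
    _ ≤ (1 + ρ) * ε + ε * (1 + ρ) := by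
        apply add_le_add
        · exact mul_le_mul hfSt hspec hspec0 (by linarith)
        · exact mul_le_mul hspec hfS (frobNorm_nonneg _) hε
    _ = 2 * (1 + ρ) * ε := by ring

end Final
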